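/- Let p be a prime and J a multiset over (ZMod p)^3 with |J| = 9p - 3. Let N^k(J) count zero-sum sub-multisets of cardinality k. Then 1 - N^p(J) + N^{2p}(J) - N^{3p}(J) + N^{4p}(J) - N^{5p}(J) + N^{6p}(J) - N^{7p}(J) + N^{8p}(J) ≡ 0 (mod p). -/

import Mathlib

/-- Number of zero-sum sub-multisets of `J` of cardinality `k`. -/
def N {p : ℕ} (k : ℕ) (J : Multiset (Fin 3 → ZMod p)) : ℕ :=
  (J.powerset.filter (fun T => Multiset.card T = k ∧ T.sum = 0)).card

namespace StmtNineAux

open Finset MvPolynomial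

lemma powerset_map {α β : Type*} (f : α → β) (s : Multiset α) :
    (s.map f).powerset = s.powerset.map (Multiset.map f) := by
  induction s using Multiset.induction with
  | empty => simp
  | cons a s ih =>
      simp only [Multiset.map_cons, Multiset.powerset_cons, ih, Multiset.map_map,
        Multiset.map_add]
      congr 1
      apply Multiset.map_congr rfl
      intro t _
      simp

lemma powerset_val {α : Type*} (s : Finset α) :
    s.powerset.val.map Finset.val = s.val.powerset := by
  simp [Finset.powerset, Multiset.map_pmap, Multiset.pmap_eq_map]

/-- Bridge from multiset powerset counting to counting finsets of the enumeration type. -/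
lemma Ncount (p k : ℕ) (J : Multiset (Fin 3 → ZMod p)) :
    N k J = (Finset.univ.filter (fun S : Finset {x // x ∈ J.toEnumFinset} =>
      S.card = k ∧ ∑ j ∈ S, (j : (Fin 3 → ZMod p) × ℕ).1 = 0)).card := by
  classical
  set t := J.toEnumFinset with ht
  have kcard : ∀ S : Finset {x // x ∈ t},
      Multiset.card ((S.map (Function.Embedding.subtype _)).val.map Prod.fst) = S.card := by
    intro S
    simp
  have ksum : ∀ S : Finset {x // x ∈ t},
      ((S.map (Function.Embedding.subtype _)).val.map Prod.fst).sum
        = ∑ j ∈ S, (j : (Fin 3 → ZMod p) × ℕ).1 := by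
    intro S
    rw [Finset.sum_eq_multiset_sum, Finset.map_val, Multiset.map_map]
    rfl
  have h1 : N k J = (t.powerset.filter (fun F =>
      Multiset.card (F.val.map Prod.fst) = k ∧ (F.val.map Prod.fst).sum = 0)).card := by
    rw [N]
    conv_lhs => rw [← Multiset.map_toEnumFinset_fst J]
    rw [← Multiset.countP_eq_card_filter, powerset_map, Multiset.countP_map,
      ← Multiset.countP_eq_card_filter, ← powerset_val, Multiset.countP_map]
    rw [← Finset.filter_val, ← Finset.card_def]
  rw [h1]
  refine Finset.card_bij' (fun F _ => F.subtype (· ∈ t))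
    (fun S _ => S.map (Function.Embedding.subtype (· ∈ t))) ?hi ?hj ?li ?ri
  case hi =>
    intro F hF
    rw [Finset.mem_filter, Finset.mem_powerset] at hF
    obtain ⟨hFt, hcard, hsum⟩ := hF
    have hmap : (F.subtype (· ∈ t)).map (Function.Embedding.subtype _) = F :=
      Finset.subtype_map_of_mem hFt
    rw [← hmap] at hcard hsum
    rw [Finset.mem_filter]
    exact ⟨Finset.mem_univ _, by rwa [kcard] at hcard, by rwa [ksum] at hsum⟩
  case hj =>
    intro S hS
    rw [Finset.mem_filter] at hS
    obtain ⟨-, hcard, hsum⟩ := hS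
    rw [Finset.mem_filter, Finset.mem_powerset]
    refine ⟨?_, ?_, ?_⟩
    · intro x hx
      rw [Finset.mem_map] at hx
      obtain ⟨y, _, rfl⟩ := hx
      exact y.2
    · rw [kcard]; exact hcard
    · rw [ksum]; exact hsum
  case li =>
    intro F hF
    rw [Finset.mem_filter, Finset.mem_powerset] at hF
    exact Finset.subtype_map_of_mem hF.1
  case ri =>
    intro S _
    ext j
    simp only [Finset.mem_subtype, Finset.mem_map, Function.Embedding.coe_subtype]
    constructor
    · rintro ⟨a, haS, ha⟩
      exact (Subtype.ext ha) ▸ haS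
    · intro h
      exact ⟨j, h, rfl⟩

lemma neg_one_pow_mul (p : ℕ) (hp : p.Prime) (m : ℕ) :
    ((-1 : ZMod p)) ^ (m * p) = (-1 : ZMod p) ^ m := by
  rcases hp.eq_two_or_odd' with h2 | hodd
  · subst h2
    have h : (-1 : ZMod 2) = 1 := by decide
    simp [h]
  · rw [mul_comm, pow_mul, Odd.neg_one_pow hodd]

set_option maxHeartbeats 1000000 in
/-- Chevalley–Warning based counting lemma. -/
lemma CW_count (p : ℕ) (hp : p.Prime) [Fact p.Prime] {σ : Type} [Fintype σ] [DecidableEq σ]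
    (e : σ → (Fin 3 → ZMod p)) (hcardσ : Fintype.card σ = 9 * p - 3) :
    (0 : ZMod p) = ∑ m ∈ Finset.range 9,
      ((Finset.univ.filter (fun S : Finset σ =>
        S.card = m * p ∧ ∑ j ∈ S, e j = 0)).card : ZMod p) * (-1 : ZMod p) ^ m := by
  classical
  have hp2 : 2 ≤ p := hp.two_le
  set c : σ → Fin 4 → ZMod p := fun j => Fin.cons 1 (e j) with hc
  set f : Fin 4 → MvPolynomial σ (ZMod p) :=
    fun i => ∑ j : σ, MvPolynomial.C (c j i) * (MvPolynomial.X j) ^ (p - 1) with hf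
  have hdeg : ∀ i, (f i).totalDegree ≤ p - 1 := by
    intro i
    refine (MvPolynomial.totalDegree_finset_sum _ _).trans ?_
    apply Finset.sup_le
    intro j _
    refine (MvPolynomial.totalDegree_mul _ _).trans ?_
    simp [MvPolynomial.totalDegree_C, MvPolynomial.totalDegree_X_pow]
  have hsum : (∑ i : Fin 4, (f i).totalDegree) < Fintype.card σ := by
    calc ∑ i : Fin 4, (f i).totalDegree ≤ ∑ _i : Fin 4, (p - 1) :=
          Finset.sum_le_sum (fun i _ => hdeg i)
      _ = 4 * (p - 1) := by simp [mul_comm]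
      _ < 9 * p - 3 := by omega
      _ = Fintype.card σ := hcardσ.symm
  have hCW := char_dvd_card_solutions_of_sum_lt (p := p) (s := (Finset.univ : Finset (Fin 4)))
    (f := f) (by simpa using hsum)
  set supp : (σ → ZMod p) → Finset σ := fun x => Finset.univ.filter (fun j => x j ≠ 0) with hsupp
  have heval : ∀ (x : σ → ZMod p) (i : Fin 4), eval x (f i) = ∑ j ∈ supp x, c j i := by
    intro x i
    rw [hf]
    simp only [map_sum, map_mul, eval_C, map_pow, eval_X]
    rw [hsupp, Finset.sum_filter]
    apply Finset.sum_congr rfl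
    intro j _
    by_cases h : x j = 0
    · have hne : p - 1 ≠ 0 := by omega
      simp [h, zero_pow hne]
    · simp [h, ZMod.pow_card_sub_one_eq_one h]
  set R : Finset σ → Prop := fun S => ((S.card : ZMod p) = 0 ∧ ∑ j ∈ S, e j = 0) with hR
  have hcond : ∀ x : σ → ZMod p, (∀ i : Fin 4, eval x (f i) = 0) ↔ R (supp x) := by
    intro x
    simp only [heval, hR]
    rw [Fin.forall_fin_succ]
    simp only [hc, Fin.cons_zero, Fin.cons_succ]
    constructor
    · rintro ⟨h0, hs⟩
      refine ⟨by simpa using h0, ?_⟩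
      funext i
      have := hs i
      simpa [Finset.sum_apply] using this
    · rintro ⟨h0, hs⟩
      refine ⟨by simpa using h0, ?_⟩
      intro i
      have := congrFun hs i
      simpa [Finset.sum_apply] using this
  have hcount : Fintype.card { x : σ → ZMod p // ∀ i ∈ Finset.univ, eval x (f i) = 0 }
      = ∑ S ∈ Finset.univ.filter R, (p - 1) ^ S.card := by
    rw [Fintype.card_subtype]
    have hfilter : (Finset.univ.filter
        (fun x : σ → ZMod p => ∀ i ∈ Finset.univ, eval x (f i) = 0))
        = Finset.univ.filter (fun x => R (supp x)) := by
      apply Finset.filter_congr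
      intro x _
      simp only [Finset.mem_univ, true_implies]
      exact hcond x
    rw [hfilter]
    rw [Finset.card_eq_sum_card_fiberwise (f := supp) (t := Finset.univ.filter R)
      (by intro x hx; simp only [Finset.mem_coe, Finset.mem_filter, Finset.mem_univ, true_and] at hx ⊢; exact hx)]
    apply Finset.sum_congr rfl
    intro S hS
    simp only [Finset.mem_filter, Finset.mem_univ, true_and] at hS
    have hfib : ((Finset.univ.filter (fun x : σ → ZMod p => R (supp x))).filter
        (fun x => supp x = S)) = Finset.univ.filter (fun x : σ → ZMod p => supp x = S) := by
      ext x
      simp only [Finset.mem_filter, Finset.mem_univ, true_and]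
      constructor
      · rintro ⟨_, h⟩; exact h
      · intro h; exact ⟨h ▸ hS, h⟩
    rw [hfib]
    have hpi : Finset.univ.filter (fun x : σ → ZMod p => supp x = S)
        = Fintype.piFinset (fun j => if j ∈ S then ({0}ᶜ : Finset (ZMod p)) else {0}) := by
      ext x
      simp only [Fintype.mem_piFinset, Finset.mem_filter, Finset.mem_univ, true_and]
      constructor
      · intro h j
        by_cases hj : j ∈ S
        · simp only [hj, if_true, Finset.mem_compl, Finset.mem_singleton]
          rw [← h] at hj
          simp only [hsupp, Finset.mem_filter, Finset.mem_univ, true_and] at hj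
          exact hj
        · simp only [hj, if_false, Finset.mem_singleton]
          rw [← h] at hj
          simp only [hsupp, Finset.mem_filter, Finset.mem_univ, true_and] at hj
          exact not_not.mp hj
      · intro h
        ext j
        simp only [hsupp, Finset.mem_filter, Finset.mem_univ, true_and]
        by_cases hj : j ∈ S
        · have := h j
          simp only [hj, if_true, Finset.mem_compl, Finset.mem_singleton] at this
          simp [hj, this]
        · have := h j
          simp only [hj, if_false, Finset.mem_singleton] at this
          simp [hj, this]
    rw [hpi, Fintype.card_piFinset]
    have hval : ∀ j : σ, (if j ∈ S then ({0}ᶜ : Finset (ZMod p)) else {0}).card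
        = if j ∈ S then p - 1 else 1 := by
      intro j
      by_cases hj : j ∈ S <;> simp [hj, Finset.card_compl, ZMod.card]
    simp only [hval]
    rw [Finset.prod_ite_mem, Finset.univ_inter, Finset.prod_const]
  have hzero : ((∑ S ∈ Finset.univ.filter R, (p - 1) ^ S.card : ℕ) : ZMod p) = 0 := by
    rw [ZMod.natCast_eq_zero_iff, ← hcount]
    convert hCW using 2
  rw [Nat.cast_sum] at hzero
  have hneg : ∀ S : Finset σ, (((p - 1) ^ S.card : ℕ) : ZMod p) = (-1 : ZMod p) ^ S.card := by
    intro S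
    rw [Nat.cast_pow]
    congr 1
    have h1 : ((p - 1 : ℕ) : ZMod p) = ((p : ℕ) : ZMod p) - 1 := by
      rw [Nat.cast_sub (by omega : 1 ≤ p), Nat.cast_one]
    rw [h1, ZMod.natCast_self, zero_sub]
  simp only [hneg] at hzero
  have hmaps : ∀ S ∈ Finset.univ.filter R, S.card / p ∈ Finset.range 9 := by
    intro S hS
    simp only [Finset.mem_filter, Finset.mem_univ, true_and, hR] at hS
    have hdvd : p ∣ S.card := (ZMod.natCast_eq_zero_iff _ _).mp hS.1
    have hle : S.card ≤ 9 * p - 3 := hcardσ ▸ (Finset.card_le_univ S)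
    obtain ⟨m, hm⟩ := hdvd
    rw [hm] at hle
    rw [hm, Nat.mul_div_cancel_left _ (by omega : 0 < p), Finset.mem_range]
    by_contra hcon
    push_neg at hcon
    have h9 : p * 9 ≤ p * m := Nat.mul_le_mul_left p hcon
    omega
  rw [← Finset.sum_fiberwise_of_maps_to hmaps] at hzero
  have hfib2 : ∀ m ∈ Finset.range 9,
      ((Finset.univ.filter R).filter (fun S => S.card / p = m))
      = Finset.univ.filter (fun S : Finset σ => S.card = m * p ∧ ∑ j ∈ S, e j = 0) := by
    intro m _
    ext S
    simp only [Finset.mem_filter, Finset.mem_univ, true_and, hR]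
    constructor
    · rintro ⟨⟨h0, hs⟩, hdiv⟩
      have hdvd : p ∣ S.card := (ZMod.natCast_eq_zero_iff _ _).mp h0
      obtain ⟨n, hn⟩ := hdvd
      rw [hn, Nat.mul_div_cancel_left _ (by omega : 0 < p)] at hdiv
      exact ⟨by rw [hn, hdiv, mul_comm], hs⟩
    · rintro ⟨hcard, hs⟩
      refine ⟨⟨?_, hs⟩, ?_⟩
      · rw [hcard]
        push_cast [ZMod.natCast_self]
        ring
      · rw [hcard, Nat.mul_div_cancel _ (by omega : 0 < p)]
  rw [Finset.sum_congr rfl (fun m hm => by rw [hfib2 m hm])] at hzero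
  have hinner : ∀ m ∈ Finset.range 9,
      (∑ S ∈ Finset.univ.filter (fun S : Finset σ =>
          S.card = m * p ∧ ∑ j ∈ S, e j = 0), (-1 : ZMod p) ^ S.card)
      = ((Finset.univ.filter (fun S : Finset σ =>
          S.card = m * p ∧ ∑ j ∈ S, e j = 0)).card : ZMod p) * (-1 : ZMod p) ^ m := by
    intro m _
    have hterm : ∀ S ∈ Finset.univ.filter (fun S : Finset σ =>
        S.card = m * p ∧ ∑ j ∈ S, e j = 0),
        (-1 : ZMod p) ^ S.card = (-1 : ZMod p) ^ m := by
      intro S hS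
      simp only [Finset.mem_filter, Finset.mem_univ, true_and] at hS
      rw [hS.1, neg_one_pow_mul p hp]
    rw [Finset.sum_congr rfl hterm, Finset.sum_const, nsmul_eq_mul]
  rw [Finset.sum_congr rfl hinner] at hzero
  exact hzero.symm

end StmtNineAux

open Finset StmtNineAux

set_option maxHeartbeats 1000000 in
theorem stmt_9 (p : ℕ) (hp : p.Prime) (J : Multiset (Fin 3 → ZMod p))
    (hJ : Multiset.card J = 9 * p - 3) :
    (1 - (N p J : ℤ) + N (2 * p) J - N (3 * p) J + N (4 * p) J - N (5 * p) J
        + N (6 * p) J - N (7 * p) J + N (8 * p) J) ≡ 0 [ZMOD p] := by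
  classical
  haveI : Fact p.Prime := ⟨hp⟩
  rw [Int.modEq_zero_iff_dvd, ← ZMod.intCast_zmod_eq_zero_iff_dvd]
  push_cast
  have hcardσ : Fintype.card {x // x ∈ J.toEnumFinset} = 9 * p - 3 := by
    have h1 := Fintype.card_coe J.toEnumFinset
    rw [Multiset.card_toEnumFinset, hJ] at h1
    exact h1
  have hcw := CW_count p hp (σ := {x // x ∈ J.toEnumFinset})
    (fun j => (j : (Fin 3 → ZMod p) × ℕ).1) hcardσ
  rw [Finset.sum_range_succ, Finset.sum_range_succ, Finset.sum_range_succ,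
    Finset.sum_range_succ, Finset.sum_range_succ, Finset.sum_range_succ,
    Finset.sum_range_succ, Finset.sum_range_succ, Finset.sum_range_succ,
    Finset.sum_range_zero] at hcw
  norm_num at hcw
  have hA0 : (Finset.univ.filter (fun S : Finset {x // x ∈ J.toEnumFinset} =>
      S = ∅ ∧ ∑ j ∈ S, (j : (Fin 3 → ZMod p) × ℕ).1 = 0)).card = 1 := by
    have h : (Finset.univ.filter (fun S : Finset {x // x ∈ J.toEnumFinset} =>
        S = ∅ ∧ ∑ j ∈ S, (j : (Fin 3 → ZMod p) × ℕ).1 = 0)) = {∅} := by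
      ext S
      simp only [Finset.mem_filter, Finset.mem_univ, true_and, Finset.mem_singleton]
      constructor
      · rintro ⟨rfl, _⟩; rfl
      · rintro rfl; simp
    rw [h, Finset.card_singleton]
  rw [hA0] at hcw
  rw [← Ncount p p J, ← Ncount p (2 * p) J, ← Ncount p (3 * p) J, ← Ncount p (4 * p) J,
    ← Ncount p (5 * p) J, ← Ncount p (6 * p) J, ← Ncount p (7 * p) J, ← Ncount p (8 * p) J] at hcw
  linear_combination -hcw
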